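/- arXiv:2307.02719 — 6 statements merged into one kernel-verified Lean document; each statement's English description precedes it below -/
import Mathlib

section
/- If there exists a differentiable function l̃(θ) satisfying ∂l̃/∂θ = U(θ)·∂l/∂θ for all θ, where U is the uncertainty function and l the original loss, then the uncertainty-sampling update E_ξ[θ_{t+1} | θ_t] = θ_t − η_t·U(θ_t)·∇l(θ_t) equals the (expected) gradient descent update θ_t − η_t·∇l̃(θ_t). -/
open MeasureTheory

/-- If an equivalent loss `ltil` satisfies `∇ltil = U · ∇l`, then the expected
uncertainty-sampling update (querying with probability `U θ` via `ξ ~ Unif[0,1]`)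
equals the gradient-descent update on `ltil`. -/
theorem stmt0 {d : ℕ}
    (l ltil : EuclideanSpace ℝ (Fin d) → ℝ)
    (U : EuclideanSpace ℝ (Fin d) → ℝ)
    (hl : Differentiable ℝ l) (hltil : Differentiable ℝ ltil)
    (hU : ∀ θ, U θ ∈ Set.Icc (0:ℝ) 1)
    (hgrad : ∀ θ, gradient ltil θ = U θ • gradient l θ) :
    ∀ (θ : EuclideanSpace ℝ (Fin d)) (η : ℝ),
      (∫ ξ in Set.Icc (0:ℝ) 1,
        (θ - (if ξ ≤ U θ then η • gradient l θ else 0)))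
        = θ - η • gradient ltil θ := by
  intro θ η
  obtain ⟨h0, h1⟩ := hU θ
  set v := η • gradient l θ with hv
  have hfun : (fun ξ : ℝ => θ - (if ξ ≤ U θ then v else 0))
      = fun ξ => θ - (Set.Iic (U θ)).indicator (fun _ => v) ξ := by
    funext ξ
    by_cases h : ξ ≤ U θ <;> simp [Set.indicator, h]
  rw [hfun, integral_sub]
  · rw [setIntegral_indicator measurableSet_Iic]
    have hset : Set.Icc (0:ℝ) 1 ∩ Set.Iic (U θ) = Set.Icc 0 (U θ) := by
      ext x
      simp only [Set.mem_inter_iff, Set.mem_Icc, Set.mem_Iic]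
      constructor
      · rintro ⟨⟨a, _⟩, b⟩; exact ⟨a, b⟩
      · rintro ⟨a, b⟩; exact ⟨⟨a, b.trans h1⟩, b⟩
    rw [hset, setIntegral_const, setIntegral_const]
    simp only [measureReal_def, Real.volume_Icc, sub_zero, ENNReal.toReal_ofReal h0,
      ENNReal.toReal_ofReal (zero_le_one), one_smul, hgrad θ, hv, smul_smul,
      mul_comm]
  · exact integrableOn_const (by simp [Real.volume_Icc])
  · apply Integrable.indicator _ measurableSet_Iic
    exact integrableOn_const (by simp [Real.volume_Icc])
end

section
/- Let q ∈ (0,1), p ∈ [0,1], l(q) = −p·log q − (1−p)·log(1−q) be the cross-entropy loss, and U(q) = −q·log q − (1−q)·log(1−q) the entropy uncertainty. Then the function l̃(q) = q·log q + (1−q)·log(1−q) − p·Li₂(q) − (1−p)·Li₂(1−q) + Li₂(1) satisfies dl̃/dq = U(q)·dl/dq for all q ∈ (0,1), where Li₂(z) = −∫₀^z log(1−u)/u du is Spence's function. -/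
open MeasureTheory

/-- Spence's function (dilogarithm): `Li₂(z) = -∫₀^z log(1-u)/u du`. -/
noncomputable def Li2 (z : ℝ) : ℝ := -∫ u in (0:ℝ)..z, Real.log (1 - u) / u

lemma li2_integrable {b : ℝ} (hb0 : 0 ≤ b) (hb1 : b < 1) :
    IntervalIntegrable (fun u => Real.log (1 - u) / u) volume 0 b := by
  rw [intervalIntegrable_iff, Set.uIoc_of_le hb0]
  have hmeas : Measurable (fun u : ℝ => Real.log (1 - u) / u) :=
    (Real.measurable_log.comp (measurable_const.sub measurable_id)).div measurable_id
  apply MeasureTheory.Integrable.mono' (integrable_const (1 / (1 - b)))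
  · exact hmeas.aestronglyMeasurable
  · filter_upwards [ae_restrict_mem measurableSet_Ioc] with u hu
    obtain ⟨hu0, hub⟩ := hu
    have h1u : 0 < 1 - u := by linarith
    have hlog : Real.log (1 - u) ≤ 0 := Real.log_nonpos (by linarith) (by linarith)
    have hbound : -Real.log (1 - u) ≤ u / (1 - u) := by
      have h := Real.log_le_sub_one_of_pos (show (0:ℝ) < (1 - u)⁻¹ by positivity)
      rw [Real.log_inv] at h
      calc -Real.log (1 - u) ≤ (1 - u)⁻¹ - 1 := h
        _ = u / (1 - u) := by field_simp; ring
    rw [Real.norm_eq_abs, abs_div, abs_of_nonneg hu0.le, abs_of_nonpos hlog]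
    calc -Real.log (1 - u) / u ≤ (u / (1 - u)) / u := by
          exact div_le_div_of_nonneg_right hbound hu0.le |>.trans_eq rfl
      _ = 1 / (1 - u) := by field_simp
      _ ≤ 1 / (1 - b) := by
          apply one_div_le_one_div_of_le (by linarith) (by linarith)

lemma hasDerivAt_Li2 {z : ℝ} (hz0 : 0 < z) (hz1 : z < 1) :
    HasDerivAt Li2 (-(Real.log (1 - z) / z)) z := by
  have hint : IntervalIntegrable (fun u => Real.log (1 - u) / u) volume 0 z :=
    li2_integrable hz0.le hz1
  have hcont : ContinuousAt (fun u : ℝ => Real.log (1 - u) / u) z := by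
    apply ContinuousAt.div
    · exact (Real.continuousAt_log (by linarith)).comp
        ((continuous_const.sub continuous_id).continuousAt)
    · exact continuousAt_id
    · exact hz0.ne'
  have hmeas : StronglyMeasurableAtFilter (fun u : ℝ => Real.log (1 - u) / u)
      (nhds z) volume :=
    ⟨Set.univ, Filter.univ_mem,
      ((Real.measurable_log.comp (measurable_const.sub measurable_id)).div
        measurable_id).aestronglyMeasurable⟩
  have h := intervalIntegral.integral_hasDerivAt_right hint hmeas hcont
  exact h.neg

/-- The equivalent loss of the cross-entropy loss under the entropy uncertainty:
`dl̃/dq = U(q) · dl/dq` on `(0,1)`. -/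
theorem stmt1 (p : ℝ) (hp : p ∈ Set.Icc (0:ℝ) 1) :
    ∀ q ∈ Set.Ioo (0:ℝ) 1,
      deriv (fun q : ℝ =>
          q * Real.log q + (1 - q) * Real.log (1 - q)
            - p * Li2 q - (1 - p) * Li2 (1 - q) + Li2 1) q
        = (-(q * Real.log q + (1 - q) * Real.log (1 - q)))
            * deriv (fun q : ℝ => -(p * Real.log q) - (1 - p) * Real.log (1 - q)) q := by
  intro q hq
  obtain ⟨hq0, hq1⟩ := hq
  have h1q : 0 < 1 - q := by linarith
  have hlogq := Real.hasDerivAt_log hq0.ne'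
  have hg : HasDerivAt (fun x : ℝ => 1 - x) (-1) q := by
    simpa using (hasDerivAt_id q).const_sub 1
  have hlog1q : HasDerivAt (fun x : ℝ => Real.log (1 - x)) ((1 - q)⁻¹ * (-1)) q :=
    (Real.hasDerivAt_log h1q.ne').comp q hg
  have hA : HasDerivAt (fun x : ℝ => x * Real.log x) (1 * Real.log q + q * q⁻¹) q :=
    (hasDerivAt_id q).mul hlogq
  have hB : HasDerivAt (fun x : ℝ => (1 - x) * Real.log (1 - x))
      ((-1) * Real.log (1 - q) + (1 - q) * ((1 - q)⁻¹ * (-1))) q := hg.mul hlog1q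
  have hL1 : HasDerivAt (fun x : ℝ => p * Li2 x) (p * -(Real.log (1 - q) / q)) q :=
    (hasDerivAt_Li2 hq0 hq1).const_mul p
  have hL2 : HasDerivAt (fun x : ℝ => (1 - p) * Li2 (1 - x))
      ((1 - p) * (-(Real.log (1 - (1 - q)) / (1 - q)) * (-1))) q :=
    (((hasDerivAt_Li2 h1q (by linarith)).comp q hg)).const_mul (1 - p)
  have hF : HasDerivAt (fun x : ℝ =>
      x * Real.log x + (1 - x) * Real.log (1 - x)
        - p * Li2 x - (1 - p) * Li2 (1 - x) + Li2 1)
      (Real.log q - Real.log (1 - q) + p * (Real.log (1 - q) / q)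
        - (1 - p) * (Real.log q / (1 - q))) q := by
    have h := (((hA.add hB).sub hL1).sub hL2).add_const (Li2 1)
    refine h.congr_deriv ?_
    simp only [sub_sub_cancel]
    field_simp
    ring
  have hG : HasDerivAt (fun x : ℝ => -(p * Real.log x) - (1 - p) * Real.log (1 - x))
      (-(p / q) + (1 - p) / (1 - q)) q := by
    have h := ((hlogq.const_mul p).neg).sub (hlog1q.const_mul (1 - p))
    refine h.congr_deriv ?_
    field_simp
    ring
  rw [hF.deriv, hG.deriv]
  field_simp
  ring
end

section
/- Let q ∈ (0,1), p ∈ [0,1], l(q) = −p·log q − (1−p)·log(1−q), and U(q) = min{q, 1−q}. Then the piecewise function l̃(q) = −(1−p)·log(2(1−q)) − q + log 2 for q < 1/2, and l̃(q) = −p·log(2q) − (1−q) + log 2 for q ≥ 1/2, is continuous on (0,1) and satisfies dl̃/dq = U(q)·dl/dq at every q ≠ 1/2. -/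
/-- Equivalent loss of the cross-entropy loss under the least-confidence
uncertainty `U(q) = min{q, 1-q}`. -/
noncomputable def ltilLC (p : ℝ) (q : ℝ) : ℝ :=
  if q < 1/2 then -((1 - p) * Real.log (2 * (1 - q))) - q + Real.log 2
  else -(p * Real.log (2 * q)) - (1 - q) + Real.log 2

theorem stmt2 (p : ℝ) (hp : p ∈ Set.Icc (0:ℝ) 1) :
    ContinuousOn (ltilLC p) (Set.Ioo (0:ℝ) 1) ∧
    ∀ q ∈ Set.Ioo (0:ℝ) 1, q ≠ 1/2 →
      deriv (ltilLC p) q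
        = min q (1 - q)
            * deriv (fun q : ℝ => -(p * Real.log q) - (1 - p) * Real.log (1 - q)) q := by
  have hcaA : ∀ x ∈ Set.Ioo (0:ℝ) 1,
      ContinuousAt (fun q : ℝ => -((1 - p) * Real.log (2 * (1 - q))) - q + Real.log 2) x := by
    intro x hx
    have h1 : (2 : ℝ) * (1 - x) ≠ 0 := by nlinarith [hx.1, hx.2]
    have hc : ContinuousAt (fun q : ℝ => 2 * (1 - q)) x := by fun_prop
    have hlog : ContinuousAt (fun q : ℝ => Real.log (2 * (1 - q))) x := hc.log h1
    exact ((hlog.const_mul (1 - p)).neg.sub continuousAt_id).add continuousAt_const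
  have hcaB : ∀ x ∈ Set.Ioo (0:ℝ) 1,
      ContinuousAt (fun q : ℝ => -(p * Real.log (2 * q)) - (1 - q) + Real.log 2) x := by
    intro x hx
    have h1 : (2 : ℝ) * x ≠ 0 := by nlinarith [hx.1, hx.2]
    have hc : ContinuousAt (fun q : ℝ => 2 * q) x := by fun_prop
    have hlog : ContinuousAt (fun q : ℝ => Real.log (2 * q)) x := hc.log h1
    exact ((hlog.const_mul p).neg.sub
      (continuousAt_const.sub continuousAt_id)).add continuousAt_const
  constructor
  · -- continuity
    intro x hx
    rcases lt_trichotomy x (1/2) with h | h | h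
    · refine ContinuousAt.continuousWithinAt ?_
      refine (hcaA x hx).congr ?_
      filter_upwards [eventually_lt_nhds h] with y hy
      simp only [ltilLC, if_pos hy]
    · have hleft : ContinuousWithinAt (ltilLC p) (Set.Iic (1/2)) x := by
        refine ((hcaA x hx).continuousWithinAt).congr ?_ ?_
        · intro y hy
          rcases lt_or_eq_of_le (Set.mem_Iic.mp hy) with hy' | hy'
          · simp only [ltilLC, if_pos hy']
          · subst hy'
            simp only [ltilLC]
            norm_num
        · subst h
          simp only [ltilLC]
          norm_num
      have hright : ContinuousWithinAt (ltilLC p) (Set.Ici (1/2)) x := by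
        refine ((hcaB x hx).continuousWithinAt).congr ?_ ?_
        · intro y hy
          simp only [ltilLC, if_neg (not_lt.mpr (Set.mem_Ici.mp hy))]
        · subst h
          simp only [ltilLC, lt_irrefl, if_false]
      have := hleft.union hright
      rw [Set.Iic_union_Ici] at this
      exact (this.mono (Set.subset_univ _))
    · refine ContinuousAt.continuousWithinAt ?_
      refine (hcaB x hx).congr ?_
      filter_upwards [eventually_gt_nhds h] with y hy
      simp only [ltilLC, if_neg (not_lt.mpr hy.le)]
  · intro q hq hq2
    have hq0 : (0:ℝ) < q := hq.1
    have hq1 : q < 1 := hq.2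
    have h1q : (1:ℝ) - q ≠ 0 := by linarith
    have hinner : HasDerivAt (fun q : ℝ => -(p * Real.log q) - (1 - p) * Real.log (1 - q))
        (-(p * q⁻¹) - (1 - p) * ((1 - q)⁻¹ * (-1))) q := by
      have h1 : HasDerivAt (fun x : ℝ => p * Real.log x) (p * q⁻¹) q :=
        (Real.hasDerivAt_log hq0.ne').const_mul p
      have h2 : HasDerivAt (fun x : ℝ => Real.log (1 - x)) ((1 - q)⁻¹ * (-1)) q :=
        (Real.hasDerivAt_log h1q).comp q ((hasDerivAt_id q).const_sub 1)
      exact h1.neg.sub (h2.const_mul (1 - p))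
    rw [hinner.deriv]
    rcases lt_or_gt_of_ne hq2 with h | h
    · -- q < 1/2
      have hL : HasDerivAt (ltilLC p)
          (-((1 - p) * ((2 * (1 - q))⁻¹ * (-2))) - 1) q := by
        have h1 : (2 : ℝ) * (1 - q) ≠ 0 := by positivity
        have hlog : HasDerivAt (fun x : ℝ => Real.log (2 * (1 - x)))
            ((2 * (1 - q))⁻¹ * (-2)) q := by
          have hin : HasDerivAt (fun x : ℝ => 2 * (1 - x)) (-2) q := by
            have := ((hasDerivAt_id q).const_sub 1).const_mul (2:ℝ)
            simpa using this
          exact (Real.hasDerivAt_log h1).comp q hin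
        have hbr : HasDerivAt
            (fun q : ℝ => -((1 - p) * Real.log (2 * (1 - q))) - q + Real.log 2)
            (-((1 - p) * ((2 * (1 - q))⁻¹ * (-2))) - 1) q := by
          simpa using ((hlog.const_mul (1 - p)).neg.sub (hasDerivAt_id q)).add_const (Real.log 2)
        apply hbr.congr_of_eventuallyEq
        filter_upwards [eventually_lt_nhds h] with x hx
        simp only [ltilLC, if_pos hx]
      rw [hL.deriv, min_eq_left (by linarith)]
      field_simp
      ring
    · -- q > 1/2
      have hL : HasDerivAt (ltilLC p)
          (-(p * ((2 * q)⁻¹ * 2)) - (-1)) q := by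
        have h1 : (2 : ℝ) * q ≠ 0 := by positivity
        have hlog : HasDerivAt (fun x : ℝ => Real.log (2 * x)) ((2 * q)⁻¹ * 2) q := by
          have hin : HasDerivAt (fun x : ℝ => 2 * x) (2:ℝ) q := by
            simpa using (hasDerivAt_id q).const_mul (2:ℝ)
          exact (Real.hasDerivAt_log h1).comp q hin
        have hbr : HasDerivAt
            (fun q : ℝ => -(p * Real.log (2 * q)) - (1 - q) + Real.log 2)
            (-(p * ((2 * q)⁻¹ * 2)) - (-1)) q := by
          simpa using ((hlog.const_mul p).neg.sub
            ((hasDerivAt_id q).const_sub 1)).add_const (Real.log 2)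
        apply hbr.congr_of_eventuallyEq
        filter_upwards [eventually_gt_nhds h] with x hx
        simp only [ltilLC, if_neg (not_lt.mpr hx.le)]
      rw [hL.deriv, min_eq_right (by linarith)]
      field_simp
      ring
end

section
/- Let μ > 0 and consider l̃(s) defined by (1/μ)·log(1−μs) + (1/μ)·log(1+μ) for s ≤ 0, −(1/μ)·log(1+μs) + (1/μ)·log(1+μ) for 0 < s < 1, and 0 for s ≥ 1. Then l̃ is continuous, satisfies l̃'(s) = −1/(1+μ|s|) for s < 1 (s ≠ 0), and l̃ is not convex on ℝ. -/
noncomputable def ltilHinge (μ : ℝ) (s : ℝ) : ℝ :=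
  if s ≤ 0 then (1/μ) * Real.log (1 - μ*s) + (1/μ) * Real.log (1 + μ)
  else if s < 1 then -((1/μ) * Real.log (1 + μ*s)) + (1/μ) * Real.log (1 + μ)
  else 0

lemma ltilHinge_eq (μ : ℝ) (hμ : 0 < μ) :
    ltilHinge μ = fun s =>
      (1/μ) * Real.log (1 - μ * min s 0) - (1/μ) * Real.log (1 + μ * min (max s 0) 1)
        + (1/μ) * Real.log (1 + μ) := by
  funext s
  unfold ltilHinge
  rcases le_or_gt s 0 with h | h
  · rw [if_pos h, min_eq_left h, max_eq_right h]
    simp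
  · rw [if_neg (not_le_of_gt h), min_eq_right h.le]
    rcases lt_or_ge s 1 with h1 | h1
    · rw [if_pos h1, max_eq_left h.le, min_eq_left h1.le]
      simp only [mul_zero, sub_zero, Real.log_one]; ring
    · rw [if_neg (not_lt_of_ge h1), max_eq_left h.le, min_eq_right h1]
      simp only [mul_zero, sub_zero, Real.log_one]; ring

theorem stmt8 (μ : ℝ) (hμ : 0 < μ) :
    Continuous (ltilHinge μ) ∧
    (∀ s : ℝ, s < 1 → s ≠ 0 → deriv (ltilHinge μ) s = -(1 / (1 + μ * |s|))) ∧
    ¬ ConvexOn ℝ Set.univ (ltilHinge μ) := by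
  refine ⟨?_, ?_, ?_⟩
  · rw [ltilHinge_eq μ hμ]
    have h1 : ∀ s : ℝ, (0:ℝ) < 1 - μ * min s 0 := by
      intro s
      have : μ * min s 0 ≤ 0 := mul_nonpos_of_nonneg_of_nonpos hμ.le (min_le_right _ _)
      linarith
    have h2 : ∀ s : ℝ, (0:ℝ) < 1 + μ * min (max s 0) 1 := by
      intro s
      have : 0 ≤ μ * min (max s 0) 1 :=
        mul_nonneg hμ.le (le_min (le_max_right _ _) zero_le_one)
      linarith
    have c1 : Continuous fun s : ℝ => 1 - μ * min s 0 := by fun_prop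
    have c2 : Continuous fun s : ℝ => 1 + μ * min (max s 0) 1 := by fun_prop
    exact (((continuous_const.mul (c1.log fun s => (h1 s).ne')).sub
      (continuous_const.mul (c2.log fun s => (h2 s).ne'))).add continuous_const)
  · intro s hs1 hs0
    rcases hs0.lt_or_gt with h | h
    · -- s < 0
      have hev : ltilHinge μ =ᶠ[nhds s]
          fun x => (1/μ) * Real.log (1 - μ*x) + (1/μ) * Real.log (1 + μ) := by
        filter_upwards [Iio_mem_nhds h] with x hx
        have hx' : x ≤ 0 := (Set.mem_Iio.mp hx).le
        simp only [ltilHinge, if_pos hx']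
      rw [hev.deriv_eq]
      have hpos : (0:ℝ) < 1 - μ * s := by nlinarith
      have hd : HasDerivAt (fun x : ℝ => (1/μ) * Real.log (1 - μ*x) + (1/μ) * Real.log (1 + μ))
          ((1/μ) * ((0 - μ) / (1 - μ*s))) s := by
        have h0 : HasDerivAt (fun x : ℝ => 1 - μ*x) (0 - μ) s := by
          exact ((hasDerivAt_const s (1:ℝ)).sub ((hasDerivAt_id s).const_mul μ)).congr_deriv (by ring)
        exact ((h0.log hpos.ne').const_mul (1/μ)).add_const _
      rw [hd.deriv, abs_of_neg h]
      have e : 1 + μ * -s = 1 - μ * s := by ring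
      rw [div_mul_div_comm, one_mul, e]
      field_simp
      ring
    · -- 0 < s < 1
      have hev : ltilHinge μ =ᶠ[nhds s]
          fun x => -((1/μ) * Real.log (1 + μ*x)) + (1/μ) * Real.log (1 + μ) := by
        filter_upwards [Ioo_mem_nhds h hs1] with x hx
        simp only [ltilHinge, if_neg (not_le_of_gt hx.1), if_pos hx.2]
      rw [hev.deriv_eq]
      have hpos : (0:ℝ) < 1 + μ * s := by nlinarith
      have hd : HasDerivAt (fun x : ℝ => -((1/μ) * Real.log (1 + μ*x)) + (1/μ) * Real.log (1 + μ))
          (-((1/μ) * ((0 + μ) / (1 + μ*s)))) s := by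
        have h0 : HasDerivAt (fun x : ℝ => 1 + μ*x) (0 + μ) s := by
          exact ((hasDerivAt_const s (1:ℝ)).add ((hasDerivAt_id s).const_mul μ)).congr_deriv (by ring)
        exact (((h0.log hpos.ne').const_mul (1/μ)).neg).add_const _
      rw [hd.deriv, abs_of_pos h]
      rw [zero_add, div_mul_div_comm, one_mul]
      field_simp
  · intro hcvx
    have key := hcvx.2 (Set.mem_univ (-2 : ℝ)) (Set.mem_univ (0 : ℝ))
      (by norm_num : (0:ℝ) ≤ (1/2 : ℝ)) (by norm_num : (0:ℝ) ≤ (1/2 : ℝ)) (by norm_num)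
    have e1 : (1/2 : ℝ) • (-2 : ℝ) + (1/2 : ℝ) • (0:ℝ) = -1 := by norm_num
    rw [e1] at key
    have v1 : ltilHinge μ (-1) = (1/μ) * Real.log (1 + μ) + (1/μ) * Real.log (1 + μ) := by
      unfold ltilHinge
      rw [if_pos (by norm_num : (-1:ℝ) ≤ 0)]
      norm_num
    have v2 : ltilHinge μ (-2) = (1/μ) * Real.log (1 + 2*μ) + (1/μ) * Real.log (1 + μ) := by
      unfold ltilHinge
      rw [if_pos (by norm_num : (-2:ℝ) ≤ 0)]
      have : 1 - μ * (-2) = 1 + 2*μ := by ring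
      rw [this]
    have v3 : ltilHinge μ 0 = (1/μ) * Real.log (1 + μ) := by
      simp [ltilHinge]
    rw [v1, v2, v3] at key
    have hlog : Real.log (1 + 2*μ) < 2 * Real.log (1 + μ) := by
      have : (2:ℝ) * Real.log (1 + μ) = Real.log ((1+μ)^2) := by
        rw [Real.log_pow]; push_cast; ring
      rw [this]
      apply Real.log_lt_log (by linarith)
      nlinarith
    have hμinv : 0 < 1/μ := by positivity
    have h2 : (1/μ) * Real.log (1 + 2*μ) < 2 * ((1/μ) * Real.log (1 + μ)) := by
      calc (1/μ) * Real.log (1 + 2*μ) < (1/μ) * (2 * Real.log (1 + μ)) :=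
            mul_lt_mul_of_pos_left hlog hμinv
        _ = 2 * ((1/μ) * Real.log (1 + μ)) := by ring
    simp only [smul_eq_mul] at key
    linarith
end

section
/- Let 0 < μ < 1 and define l̃_μ(s) = (1/(1+μ))·exp(−(1+μ)s) + μ/(1+μ) for s ≥ 0 and l̃_μ(s) = (1/(1−μ))·exp(−(1−μ)s) − μ/(1−μ) for s < 0. Then l̃_μ is C¹ on ℝ, convex, and satisfies l̃_μ'(s) = −exp(−μ|s|)·exp(−s) for all s ∈ ℝ, i.e., it is the equivalent loss of the exponential loss l(s) = exp(−s) under the exponential uncertainty U_μ(s) = exp(−μ|s|). -/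
/-- Equivalent loss of the exponential loss under the exponential uncertainty
`U_μ(s) = exp(-μ|s|)`. -/
noncomputable def ltilExp (μ : ℝ) (s : ℝ) : ℝ :=
  if 0 ≤ s then (1/(1+μ)) * Real.exp (-(1+μ)*s) + μ/(1+μ)
  else (1/(1-μ)) * Real.exp (-(1-μ)*s) - μ/(1-μ)

private lemma piece_deriv (c a b x : ℝ) (hc : c ≠ 0) :
    HasDerivAt (fun s => a/c * Real.exp (-c*s) + b) (-(a * Real.exp (-c*x))) x := by
  have h : HasDerivAt (fun s : ℝ => Real.exp (-c*s)) (Real.exp (-c*x) * (-c)) x := by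
    simpa using ((hasDerivAt_id x).const_mul (-c)).exp
  have := (h.const_mul (a/c)).add_const b
  refine this.congr_deriv ?_
  field_simp

theorem stmt10 (μ : ℝ) (hμ0 : 0 < μ) (hμ1 : μ < 1) :
    ContDiff ℝ 1 (ltilExp μ) ∧
    ConvexOn ℝ Set.univ (ltilExp μ) ∧
    ∀ s : ℝ, HasDerivAt (ltilExp μ) (-(Real.exp (-μ*|s|) * Real.exp (-s))) s := by
  have h1p : (1:ℝ) + μ ≠ 0 := by linarith
  have h1m : (1:ℝ) - μ ≠ 0 := by linarith
  set fp : ℝ → ℝ := fun s => (1/(1+μ)) * Real.exp (-(1+μ)*s) + μ/(1+μ) with hfp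
  set fm : ℝ → ℝ := fun s => (1/(1-μ)) * Real.exp (-(1-μ)*s) - μ/(1-μ) with hfm
  have hpder : ∀ x, HasDerivAt fp (-Real.exp (-(1+μ)*x)) x := by
    intro x
    have := piece_deriv (1+μ) 1 (μ/(1+μ)) x h1p
    rw [hfp]
    simpa only [one_mul] using this
  have hmder : ∀ x, HasDerivAt fm (-Real.exp (-(1-μ)*x)) x := by
    intro x
    have := piece_deriv (1-μ) 1 (-(μ/(1-μ))) x h1m
    rw [hfm]
    simpa only [one_mul, ← sub_eq_add_neg] using this
  have hval0 : fp 0 = fm 0 := by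
    rw [hfp, hfm]
    simp only [mul_zero, Real.exp_zero, mul_one]
    field_simp
  have hlt0 : ltilExp μ 0 = fp 0 := by
    simp only [ltilExp]
    rw [if_pos (le_refl (0:ℝ)), hfp]
  have hder : ∀ s : ℝ, HasDerivAt (ltilExp μ) (-(Real.exp (-μ*|s|) * Real.exp (-s))) s := by
    intro s
    rcases lt_trichotomy s 0 with hs | hs | hs
    · have heq : ltilExp μ =ᶠ[nhds s] fm := by
        filter_upwards [Iio_mem_nhds hs] with t ht
        simp only [ltilExp, if_neg (not_le.mpr (Set.mem_Iio.mp ht)), hfm]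
      have := (hmder s).congr_of_eventuallyEq heq
      refine this.congr_deriv ?_
      rw [abs_of_neg hs, ← Real.exp_add]
      ring_nf
    · subst hs
      have hwp : HasDerivWithinAt (ltilExp μ) (-Real.exp 0) (Set.Ici 0) 0 := by
        have h0 : HasDerivWithinAt fp (-Real.exp 0) (Set.Ici 0) 0 := by
          simpa using (hpder 0).hasDerivWithinAt
        exact h0.congr
          (fun t ht => by simp only [ltilExp, if_pos (Set.mem_Ici.mp ht), hfp]) hlt0
      have hwm : HasDerivWithinAt (ltilExp μ) (-Real.exp 0) (Set.Iic 0) 0 := by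
        have h0 : HasDerivWithinAt fm (-Real.exp 0) (Set.Iic 0) 0 := by
          simpa using (hmder 0).hasDerivWithinAt
        refine h0.congr (fun t ht => ?_) (hlt0.trans hval0)
        rcases eq_or_lt_of_le (Set.mem_Iic.mp ht) with h | h
        · rw [h]; exact hlt0.trans hval0
        · simp only [ltilExp, if_neg (not_le.mpr h), hfm]
      have := hwm.union hwp
      rw [Set.Iic_union_Ici, hasDerivWithinAt_univ] at this
      simpa using this
    · have heq : ltilExp μ =ᶠ[nhds s] fp := by
        filter_upwards [Ioi_mem_nhds hs] with t ht
        simp only [ltilExp, if_pos (le_of_lt (Set.mem_Ioi.mp ht)), hfp]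
      have := (hpder s).congr_of_eventuallyEq heq
      refine this.congr_deriv ?_
      rw [abs_of_pos hs, ← Real.exp_add]
      ring_nf
  have hdiff : Differentiable ℝ (ltilExp μ) := fun s => (hder s).differentiableAt
  have hderiv_eq : deriv (ltilExp μ) = fun s => -(Real.exp (-μ*|s|) * Real.exp (-s)) := by
    funext s; exact (hder s).deriv
  have hcontderiv : Continuous fun s : ℝ => -(Real.exp (-μ*|s|) * Real.exp (-s)) := by
    fun_prop
  refine ⟨?_, ?_, hder⟩
  · rw [contDiff_one_iff_deriv]
    exact ⟨hdiff, hderiv_eq ▸ hcontderiv⟩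
  · apply Monotone.convexOn_univ_of_deriv hdiff
    rw [hderiv_eq]
    intro x y hxy
    have key : μ*|x| + x ≤ μ*|y| + y := by
      rcases abs_cases x with ⟨hx, _⟩ | ⟨hx, _⟩ <;>
        rcases abs_cases y with ⟨hy, _⟩ | ⟨hy, _⟩ <;> rw [hx, hy] <;> nlinarith
    have hle : Real.exp (-(μ*|y|) + -y) ≤ Real.exp (-(μ*|x|) + -x) :=
      Real.exp_le_exp.mpr (by linarith)
    simp only [neg_le_neg_iff]
    calc Real.exp (-μ*|y|) * Real.exp (-y) = Real.exp (-(μ*|y|) + -y) := by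
          rw [← Real.exp_add]; ring_nf
      _ ≤ Real.exp (-(μ*|x|) + -x) := hle
      _ = Real.exp (-μ*|x|) * Real.exp (-x) := by rw [← Real.exp_add]; ring_nf
end

section
/- Let U(θ;X) = exp(L(θ;X)) where L(θ;X_i) = l(θ;(X_i,Y_i)) is differentiable in θ. If at each step an index i_t ∈ [n] is sampled with probability exp(l(θ_t;(X_i,Y_i))) / Σ_j exp(l(θ_t;(X_j,Y_j))) and the gradient g_t = ∇_θ l(θ_t;(X_{i_t},Y_{i_t})) is taken, then E[g_t | θ_t] = ∇_θ log(Σ_{i=1}^n exp(l(θ_t;(X_i,Y_i)))), i.e., the procedure performs stochastic gradient descent on the log-sum-exp of the losses. -/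
/-- Exponential-loss-as-uncertainty pool-based sampling performs SGD on the
log-sum-exp of the losses: the softmax-weighted expected gradient equals the
gradient of `log Σᵢ exp(l(θ;(Xᵢ,Yᵢ)))`. -/
theorem stmt18 {d n : ℕ} (hn : 0 < n)
    (l : EuclideanSpace ℝ (Fin d) → Fin n → ℝ)
    (hl : ∀ i, Differentiable ℝ (fun θ => l θ i))
    (θ : EuclideanSpace ℝ (Fin d)) :
    ∑ i, (Real.exp (l θ i) / ∑ j, Real.exp (l θ j))
        • gradient (fun θ' => l θ' i) θ
      = gradient (fun θ' => Real.log (∑ i, Real.exp (l θ' i))) θ := by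
  have : NeZero n := ⟨hn.ne'⟩
  set S : ℝ := ∑ j, Real.exp (l θ j) with hSdef
  have hSpos : 0 < S := Finset.sum_pos (fun i _ => Real.exp_pos _) Finset.univ_nonempty
  have hSd : ∀ i : Fin n, HasFDerivAt (fun θ' => Real.exp (l θ' i))
      (Real.exp (l θ i) • fderiv ℝ (fun θ' => l θ' i) θ) θ :=
    fun i => (Real.hasDerivAt_exp _).comp_hasFDerivAt θ ((hl i θ).hasFDerivAt)
  have hS : HasFDerivAt (fun θ' => ∑ i, Real.exp (l θ' i))
      (∑ i, Real.exp (l θ i) • fderiv ℝ (fun θ' => l θ' i) θ) θ :=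
    HasFDerivAt.fun_sum fun i _ => hSd i
  have hlog : HasFDerivAt (fun θ' => Real.log (∑ i, Real.exp (l θ' i)))
      (S⁻¹ • ∑ i, Real.exp (l θ i) • fderiv ℝ (fun θ' => l θ' i) θ) θ :=
    by have := (Real.hasDerivAt_log hSpos.ne').comp_hasFDerivAt θ hS; exact this
  rw [(hasFDerivAt_iff_hasGradientAt.mp hlog).gradient]
  simp only [map_smul, map_sum, gradient]
  rw [Finset.smul_sum]
  refine Finset.sum_congr rfl fun i _ => ?_
  rw [smul_smul, div_eq_inv_mul]
end
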